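/- For the superpotential W = a x³ + b y³ + c z³ + d xyz on ℂ³, the system x ∂W/∂x = y ∂W/∂y = z ∂W/∂z = 0 has a solution with (x,y,z) ≠ (0,0,0) if and only if a²b²c²(d³ + 27abc) = 0. -/
import Mathlib


/-- For the superpotential `W = a x³ + b y³ + c z³ + d xyz` on `ℂ³`, the
system `x ∂W/∂x = y ∂W/∂y = z ∂W/∂z = 0` has a solution with `(x,y,z) ≠ (0,0,0)` if and
only if `a²b²c²(d³ + 27abc) = 0`. -/
theorem statement12 (a b c d : ℂ) :
    (∃ x y z : ℂ, ¬ (x = 0 ∧ y = 0 ∧ z = 0) ∧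
      x * (3 * a * x ^ 2 + d * y * z) = 0 ∧
      y * (3 * b * y ^ 2 + d * x * z) = 0 ∧
      z * (3 * c * z ^ 2 + d * x * y) = 0) ↔
    a ^ 2 * b ^ 2 * c ^ 2 * (d ^ 3 + 27 * a * b * c) = 0 := by
  constructor
  · rintro ⟨x, y, z, hne, h1, h2, h3⟩
    by_contra h
    have ha : a ≠ 0 := fun h0 => h (by rw [h0]; ring)
    have hb : b ≠ 0 := fun h0 => h (by rw [h0]; ring)
    have hc : c ≠ 0 := fun h0 => h (by rw [h0]; ring)
    have hd : d ^ 3 + 27 * a * b * c ≠ 0 := fun h0 => h (by rw [h0]; ring)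
    have h3' : (3 : ℂ) ≠ 0 := by norm_num
    have cube : ∀ e t : ℂ, e ≠ 0 → 3 * e * t ^ 3 = 0 → t = 0 := by
      intro e t he ht
      have : t ^ 3 = 0 := by
        rcases mul_eq_zero.mp ht with h' | h'
        · exact absurd h' (mul_ne_zero h3' he)
        · exact h'
      exact pow_eq_zero_iff (n := 3) (by norm_num) |>.mp this
    rcases eq_or_ne x 0 with hx | hx
    · subst hx
      have hy : y = 0 := cube b y hb (by linear_combination h2)
      have hz : z = 0 := cube c z hc (by linear_combination h3)
      exact hne ⟨rfl, hy, hz⟩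
    rcases eq_or_ne y 0 with hy | hy
    · subst hy
      have hx0 : x = 0 := cube a x ha (by linear_combination h1)
      exact hx hx0
    rcases eq_or_ne z 0 with hz | hz
    · subst hz
      have hx0 : x = 0 := cube a x ha (by linear_combination h1)
      exact hx hx0
    -- all nonzero
    have e1 : 3 * a * x ^ 2 + d * y * z = 0 :=
      (mul_eq_zero.mp h1).resolve_left hx
    have e2 : 3 * b * y ^ 2 + d * x * z = 0 :=
      (mul_eq_zero.mp h2).resolve_left hy
    have e3 : 3 * c * z ^ 2 + d * x * y = 0 :=
      (mul_eq_zero.mp h3).resolve_left hz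
    have key : (d ^ 3 + 27 * a * b * c) * (x * y * z) ^ 2 = 0 := by
      linear_combination (9 * b * c * y ^ 2 * z ^ 2) * e1 - (3 * c * d * y * z ^ 3) * e2 +
        (d ^ 2 * x * y * z ^ 2) * e3
    rcases mul_eq_zero.mp key with h' | h'
    · exact hd h'
    · exact (pow_ne_zero 2 (mul_ne_zero (mul_ne_zero hx hy) hz)) h'
  · intro h
    rcases eq_or_ne a 0 with ha | ha
    · exact ⟨1, 0, 0, by simp, by simp [ha], by ring_nf, by ring_nf⟩
    rcases eq_or_ne b 0 with hb | hb
    · exact ⟨0, 1, 0, by simp, by ring_nf, by simp [hb], by ring_nf⟩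
    rcases eq_or_ne c 0 with hc | hc
    · exact ⟨0, 0, 1, by simp, by ring_nf, by ring_nf, by simp [hc]⟩
    have hd : d ^ 3 + 27 * a * b * c = 0 := by
      have habc : a ^ 2 * b ^ 2 * c ^ 2 ≠ 0 :=
        mul_ne_zero (mul_ne_zero (pow_ne_zero 2 ha) (pow_ne_zero 2 hb)) (pow_ne_zero 2 hc)
      exact (mul_eq_zero.mp h).resolve_left habc
    have hdne : d ≠ 0 := by
      intro h0
      apply ha
      have : 27 * a * b * c = 0 := by rw [h0] at hd; linear_combination hd
      rcases mul_eq_zero.mp this with h' | h'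
      · rcases mul_eq_zero.mp h' with h'' | h''
        · rcases mul_eq_zero.mp h'' with h3 | h3
          · exact absurd h3 (by norm_num)
          · exact h3
        · exact absurd h'' hb
      · exact absurd h' hc
    obtain ⟨z, hz3⟩ := Complex.isAlgClosed.exists_pow_nat_eq (a / c) (by norm_num : 0 < 3)
    have hz : c * z ^ 3 = a := by rw [hz3]; field_simp
    have hzne : z ≠ 0 := by
      intro h0
      apply ha
      rw [h0] at hz
      simpa using hz.symm
    refine ⟨d, -3 * c * z ^ 2, d * z, by simp [hdne], ?_, ?_, ?_⟩
    · linear_combination (-3 * d ^ 3) * hz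
    · linear_combination (-3 * a) * hd + (-3 * d ^ 3 - 81 * b * c * (c * z ^ 3 + a)) * hz
    · ring
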